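/- arXiv:2208.04912 — 4 statements merged into one kernel-verified Lean document; each statement's English description precedes it below -/
import Mathlib

section
/- Let X, Y, Z be locally convex Hausdorff topological vector spaces, let A : X → Y and B : X → Z be continuous linear maps, let S ⊆ Y and T ⊆ Z be non-empty closed convex cones, and let φ ∈ X*. Then the following are equivalent: (1) for all x ∈ X, if A(x) ∈ S and B(x) ∈ T then φ(x) ≥ 0; (2) φ lies in the weak-* closure of { A*(μ) + B*(ν) : μ ∈ S⁺, ν ∈ T⁺ }. -/
open LinearMap Set Filter Topology

section FarkasAux

variable {X : Type*} [AddCommGroup X] [Module ℝ X] [TopologicalSpace X]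
  [IsTopologicalAddGroup X] [ContinuousSMul ℝ X]

/-- Evaluation at a point, as a linear map on the weak dual. -/
noncomputable def farkasEvalLM (x : X) : WeakDual ℝ X →ₗ[ℝ] ℝ where
  toFun ψ := ψ x
  map_add' _ _ := rfl
  map_smul' _ _ := rfl

/-- Every continuous linear functional on the weak-* dual is evaluation at a point. -/
theorem farkas_weakDual_dual_rep (f : WeakDual ℝ X →L[ℝ] ℝ) :
    ∃ x₀ : X, ∀ ψ : WeakDual ℝ X, f ψ = ψ x₀ := by
  haveI : Nonempty X := ⟨0⟩
  have hws :=
    (topDualPairing ℝ X).weakBilin_withSeminorms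
  set q : Seminorm ℝ (WeakDual ℝ X) := (normSeminorm ℝ ℝ).comp (f : WeakDual ℝ X →ₗ[ℝ] ℝ)
    with hq_def
  have hq : Continuous q := by
    have : Continuous fun ψ : WeakDual ℝ X => ‖f ψ‖ := f.continuous.norm
    exact this
  obtain ⟨s, C, hC0, hle⟩ := Seminorm.bound_of_continuous hws q hq
  have hker : ⨅ i : {x // x ∈ s}, ker (farkasEvalLM (i : X)) ≤
      ker (f : WeakDual ℝ X →ₗ[ℝ] ℝ) := by
    intro ψ hψ
    simp only [Submodule.mem_iInf, mem_ker] at hψ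
    have hsup : (s.sup (topDualPairing ℝ X).toSeminormFamily) ψ ≤ 0 := by
      refine Seminorm.finset_sup_apply_le le_rfl fun i hi => ?_
      have h0 : ψ i = 0 := hψ ⟨i, hi⟩
      have : ((topDualPairing ℝ X).toSeminormFamily i) ψ = ‖ψ i‖ := rfl
      rw [this, h0, norm_zero]
    have hq0 : ‖f ψ‖ ≤ 0 := by
      calc ‖f ψ‖ = q ψ := rfl
        _ ≤ (C • s.sup (topDualPairing ℝ X).toSeminormFamily) ψ := hle ψ
        _ = (C : ℝ) * (s.sup (topDualPairing ℝ X).toSeminormFamily) ψ := rfl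
        _ ≤ 0 := mul_nonpos_of_nonneg_of_nonpos C.coe_nonneg hsup
    exact norm_le_zero_iff.mp hq0
  have hspan := mem_span_of_iInf_ker_le_ker (𝕜 := ℝ) hker
  rw [Submodule.mem_span_range_iff_exists_fun] at hspan
  obtain ⟨c, hc⟩ := hspan
  refine ⟨∑ i : {x // x ∈ s}, c i • (i : X), fun ψ => ?_⟩
  have h := congrArg (fun g : WeakDual ℝ X →ₗ[ℝ] ℝ => g ψ) hc
  simp only [LinearMap.coe_sum, Finset.sum_apply, LinearMap.smul_apply] at h
  rw [map_sum]
  simp only [map_smul]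
  exact h.symm

end FarkasAux

section Bipolar

variable {Y : Type*} [AddCommGroup Y] [Module ℝ Y] [TopologicalSpace Y]
  [IsTopologicalAddGroup Y] [ContinuousSMul ℝ Y] [LocallyConvexSpace ℝ Y]

/-- A nonempty closed cone contains the origin. -/
theorem farkas_zero_mem_cone {S : Set Y} (hSne : S.Nonempty) (hScl : IsClosed S)
    (hScone : ∀ y ∈ S, ∀ l : ℝ, 0 < l → l • y ∈ S) : (0 : Y) ∈ S := by
  obtain ⟨y, hy⟩ := hSne
  have htend : Tendsto (fun l : ℝ => l • y) (𝓝[>] 0) (𝓝 0) := by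
    have : Tendsto (fun l : ℝ => l • y) (𝓝 0) (𝓝 ((0 : ℝ) • y)) :=
      (continuous_id.smul continuous_const).tendsto 0
    rw [zero_smul] at this
    exact this.mono_left nhdsWithin_le_nhds
  have : (0 : Y) ∈ closure S :=
    mem_closure_of_tendsto htend (eventually_nhdsWithin_of_forall fun l hl => hScone y hy l hl)
  rwa [hScl.closure_eq] at this

/-- Bipolar-type theorem: a point on which every nonnegative functional on a closed
convex cone is nonnegative belongs to the cone. -/
theorem farkas_mem_of_dual_nonneg {S : Set Y} (hSne : S.Nonempty) (hScl : IsClosed S)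
    (hSconv : Convex ℝ S) (hScone : ∀ y ∈ S, ∀ l : ℝ, 0 < l → l • y ∈ S)
    {y : Y} (hy : ∀ μ : Y →L[ℝ] ℝ, (∀ s ∈ S, 0 ≤ μ s) → 0 ≤ μ y) : y ∈ S := by
  by_contra hmem
  obtain ⟨g, u, hgs, hgy⟩ := geometric_hahn_banach_closed_point hSconv hScl hmem
  have h0S : (0 : Y) ∈ S := farkas_zero_mem_cone hSne hScl hScone
  have hu : 0 < u := by simpa using hgs 0 h0S
  have hgle : ∀ s ∈ S, g s ≤ 0 := by
    intro s hs
    by_contra hpos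
    push_neg at hpos
    have hl : 0 < (u + 1) / g s := div_pos (by linarith) hpos
    have := hgs _ (hScone s hs _ hl)
    rw [map_smul, smul_eq_mul, div_mul_cancel₀ _ hpos.ne'] at this
    linarith
  have := hy (-g) fun s hs => by simpa using hgle s hs
  simp only [ContinuousLinearMap.neg_apply, le_neg, neg_zero] at this
  linarith

end Bipolar

/-- Two-constraint Farkas' lemma in locally convex spaces. -/
theorem farkas_locally_convex_two_constraints
    (X Y Z : Type*)
    [AddCommGroup X] [Module ℝ X] [TopologicalSpace X] [IsTopologicalAddGroup X]
    [ContinuousSMul ℝ X] [LocallyConvexSpace ℝ X] [T2Space X]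
    [AddCommGroup Y] [Module ℝ Y] [TopologicalSpace Y] [IsTopologicalAddGroup Y]
    [ContinuousSMul ℝ Y] [LocallyConvexSpace ℝ Y] [T2Space Y]
    [AddCommGroup Z] [Module ℝ Z] [TopologicalSpace Z] [IsTopologicalAddGroup Z]
    [ContinuousSMul ℝ Z] [LocallyConvexSpace ℝ Z] [T2Space Z]
    (A : X →L[ℝ] Y) (B : X →L[ℝ] Z)
    (S : Set Y) (hSne : S.Nonempty) (hScl : IsClosed S) (hSconv : Convex ℝ S)
    (hScone : ∀ y ∈ S, ∀ l : ℝ, 0 < l → l • y ∈ S)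
    (T : Set Z) (hTne : T.Nonempty) (hTcl : IsClosed T) (hTconv : Convex ℝ T)
    (hTcone : ∀ z ∈ T, ∀ l : ℝ, 0 < l → l • z ∈ T)
    (φ : WeakDual ℝ X) :
    (∀ x : X, A x ∈ S → B x ∈ T → 0 ≤ φ x) ↔
      φ ∈ closure {χ : WeakDual ℝ X |
        ∃ (μ : WeakDual ℝ Y) (ν : WeakDual ℝ Z),
          (∀ y ∈ S, 0 ≤ μ y) ∧ (∀ z ∈ T, 0 ≤ ν z) ∧
          ∀ x : X, χ x = μ (A x) + ν (B x)} := by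
  haveI : LocallyConvexSpace ℝ (WeakDual ℝ X) :=
    WeakBilin.locallyConvexSpace (B := topDualPairing ℝ X)
  set K : Set (WeakDual ℝ X) := {χ : WeakDual ℝ X |
        ∃ (μ : WeakDual ℝ Y) (ν : WeakDual ℝ Z),
          (∀ y ∈ S, 0 ≤ μ y) ∧ (∀ z ∈ T, 0 ≤ ν z) ∧
          ∀ x : X, χ x = μ (A x) + ν (B x)} with hK
  constructor
  · intro h1
    by_contra hφ
    have hKconv : Convex ℝ K := by
      rintro χ₁ ⟨μ₁, ν₁, hμ₁, hν₁, h₁⟩ χ₂ ⟨μ₂, ν₂, hμ₂, hν₂, h₂⟩ a b ha hb hab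
      refine ⟨a • μ₁ + b • μ₂, a • ν₁ + b • ν₂, ?_, ?_, fun x => ?_⟩
      · intro y hy
        exact add_nonneg (mul_nonneg ha (hμ₁ y hy)) (mul_nonneg hb (hμ₂ y hy))
      · intro z hz
        exact add_nonneg (mul_nonneg ha (hν₁ z hz)) (mul_nonneg hb (hν₂ z hz))
      · show a * χ₁ x + b * χ₂ x =
          (a * μ₁ (A x) + b * μ₂ (A x)) + (a * ν₁ (B x) + b * ν₂ (B x))
        rw [h₁ x, h₂ x]
        ring
    obtain ⟨f, u, hfs, hfφ⟩ :=
      geometric_hahn_banach_closed_point hKconv.closure isClosed_closure hφ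
    obtain ⟨x₀, hx₀⟩ := farkas_weakDual_dual_rep f
    have h0K : (0 : WeakDual ℝ X) ∈ K :=
      ⟨0, 0, fun y _ => le_rfl, fun z _ => le_rfl, fun x => (add_zero (0 : ℝ)).symm⟩
    have hu : 0 < u := by
      have h0 : f 0 = 0 := map_zero f
      have := hfs 0 (subset_closure h0K)
      linarith
    have hKle : ∀ χ ∈ K, χ x₀ ≤ 0 := by
      intro χ hχ
      by_contra hpos
      push_neg at hpos
      obtain ⟨μ, ν, hμ, hν, hrep⟩ := hχ
      have hl : 0 < (u + 1) / χ x₀ := div_pos (by linarith) hpos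
      have hmemK : ((u + 1) / χ x₀) • χ ∈ K := by
        refine ⟨((u + 1) / χ x₀) • μ, ((u + 1) / χ x₀) • ν, ?_, ?_, fun x => ?_⟩
        · intro y hy; exact mul_nonneg hl.le (hμ y hy)
        · intro z hz; exact mul_nonneg hl.le (hν z hz)
        · show ((u + 1) / χ x₀) * χ x =
            ((u + 1) / χ x₀) * μ (A x) + ((u + 1) / χ x₀) * ν (B x)
          rw [hrep x]; ring
      have := hfs _ (subset_closure hmemK)
      rw [hx₀] at this
      have heval : (((u + 1) / χ x₀) • χ) x₀ = ((u + 1) / χ x₀) * χ x₀ := rfl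
      rw [heval, div_mul_cancel₀ _ hpos.ne'] at this
      linarith
    have hAle : ∀ μ : Y →L[ℝ] ℝ, (∀ y ∈ S, 0 ≤ μ y) → μ (A x₀) ≤ 0 := by
      intro μ hμ
      have hmemK : (μ.comp A : WeakDual ℝ X) ∈ K :=
        ⟨μ, 0, hμ, fun z _ => le_rfl, fun x => (add_zero (μ (A x))).symm⟩
      exact hKle _ hmemK
    have hBle : ∀ ν : Z →L[ℝ] ℝ, (∀ z ∈ T, 0 ≤ ν z) → ν (B x₀) ≤ 0 := by
      intro ν hν
      have hmemK : (ν.comp B : WeakDual ℝ X) ∈ K :=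
        ⟨0, ν, fun y _ => le_rfl, hν, fun x => (zero_add (ν (B x))).symm⟩
      exact hKle _ hmemK
    have hAS : A (-x₀) ∈ S := by
      refine farkas_mem_of_dual_nonneg hSne hScl hSconv hScone fun μ hμ => ?_
      have := hAle μ hμ
      rw [map_neg, map_neg]
      linarith
    have hBT : B (-x₀) ∈ T := by
      refine farkas_mem_of_dual_nonneg hTne hTcl hTconv hTcone fun ν hν => ?_
      have := hBle ν hν
      rw [map_neg, map_neg]
      linarith
    have hφx := h1 (-x₀) hAS hBT
    have hfφ' : u < φ x₀ := by rw [hx₀ φ] at hfφ; exact hfφ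
    rw [map_neg] at hφx
    linarith
  · intro hmem x hAx hBx
    have hcl : IsClosed {χ : WeakDual ℝ X | 0 ≤ χ x} :=
      isClosed_le continuous_const (WeakDual.eval_continuous x)
    have hsub : K ⊆ {χ : WeakDual ℝ X | 0 ≤ χ x} := by
      rintro χ ⟨μ, ν, hμ, hν, hrep⟩
      simp only [Set.mem_setOf_eq, hrep x]
      exact add_nonneg (hμ _ hAx) (hν _ hBx)
    exact closure_minimal hsub hcl hmem
end

section
/- Let D be a set, Γ a set of real-valued cost functions over D, and ρ : D^r → ℝ. If ρ ∈ ℓExpr(Γ), then every weighted polymorphism of Γ weight-improves ρ; that is, ℓExpr(Γ) ⊆ Imp(wPol(Γ)). -/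
open Finsupp

/-- A cost function of arity `r` over the domain `D`. -/
abbrev CostFn (D : Type*) (r : ℕ) := (Fin r → D) → ℝ

/-- A (finite-)valued language: a set of cost functions of arbitrary arities. -/
abbrev Lang (D : Type*) := Set (Σ r : ℕ, CostFn D r)

/-- The set of `k`-ary operations on `D`. -/
abbrev Op (D : Type*) (k : ℕ) := (Fin k → D) → D

/-- `f` is a `k`-ary projection. -/
def IsProj {D : Type*} {k : ℕ} (f : Op D k) : Prop := ∃ i : Fin k, f = fun x => x i

/-- `M_k(Γ)`: pairs `(γ, S)` with `γ ∈ Γ` and `S` a matrix over `D` with `ar(γ)` rows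
and `k` columns. -/
def MkIdx (D : Type*) (Γ : Lang D) (k : ℕ) :=
  Σ g : {g : Σ r : ℕ, CostFn D r // g ∈ Γ}, Fin g.1.1 → Fin k → D

/-- `Σ_{(S,γ)} λ(S,γ) · γ(f(S))`, where `f` is applied to `S` row-wise. -/
noncomputable def lamSum {D : Type*} {Γ : Lang D} {k : ℕ}
    (lam : MkIdx D Γ k →₀ ℝ) (f : Op D k) : ℝ :=
  lam.sum fun p w => w * p.1.1.2 fun j => f (p.2 j)

/-- `ρ` belongs to the local expressive power of `Γ`. -/
def LExpr {D : Type*} (Γ : Lang D) {r : ℕ} (ρ : CostFn D r) : Prop :=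
  ∀ ε : ℝ, 0 < ε → ∀ (k : ℕ) (x : Fin k → Fin r → D) (F : Finset (Op D k)),
    ∃ (lam : MkIdx D Γ k →₀ ℝ) (c : ℝ),
      (∀ p, 0 ≤ lam p) ∧
      (∀ i : Fin k, |ρ (x i) - (lamSum lam (fun v => v i) + c)| ≤ ε) ∧
      (∀ f ∈ F, ρ (fun j => f fun i => x i j) ≤ lamSum lam f + c + ε)

/-- A `k`-ary weighting: finitely supported, total weight `0`, nonnegative on
non-projections. -/
def IsWeighting {D : Type*} {k : ℕ} (ω : Op D k →₀ ℝ) : Prop :=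
  (ω.sum fun _ w => w) = 0 ∧ ∀ f : Op D k, ¬ IsProj f → 0 ≤ ω f

/-- `ω` weight-improves the cost function `ρ`. -/
def Improves {D : Type*} {k r : ℕ} (ω : Op D k →₀ ℝ) (ρ : CostFn D r) : Prop :=
  ∀ x : Fin k → Fin r → D,
    (ω.sum fun f w => w * ρ fun j => f fun i => x i j) ≤ 0

/-- The weighted polymorphisms of `Γ`. -/
def wPol {D : Type*} (Γ : Lang D) : Set (Σ k : ℕ, Op D k →₀ ℝ) :=
  {ω | IsWeighting ω.2 ∧ ∀ γ ∈ Γ, Improves ω.2 γ.2}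

/-- `ρ` is weight-improved by every weighting in `Ω`. -/
def Imp {D : Type*} (Ω : Set (Σ k : ℕ, Op D k →₀ ℝ)) {r : ℕ} (ρ : CostFn D r) : Prop :=
  ∀ ω ∈ Ω, Improves ω.2 ρ

/-- `σ` is an affine conical combination over `Γ`. -/
def AffConic {D : Type*} (Γ : Lang D) {n : ℕ} (σ : CostFn D n) : Prop :=
  ∃ (m : ℕ) (γ : Fin m → {g : Σ r : ℕ, CostFn D r // g ∈ Γ})
    (s : ∀ j : Fin m, Fin (γ j).1.1 → Fin n) (lam : Fin m → ℚ) (c : ℚ),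
    (∀ j, 0 ≤ lam j) ∧
    ∀ x : Fin n → D, σ x = (∑ j, (lam j : ℝ) * (γ j).1.2 fun i => x (s j i)) + (c : ℝ)

/-- `ρ` is expressible in `Γ` (i.e. `ρ ∈ ⟨Γ⟩`). -/
def Expressible {D : Type*} (Γ : Lang D) {r : ℕ} (ρ : CostFn D r) : Prop :=
  ∃ (n : ℕ) (w : Fin r → Fin n) (σ : CostFn D n), AffConic Γ σ ∧
    ∀ x : Fin r → D,
      ρ x = ⨅ h : {h : Fin n → D // ∀ i, h (w i) = x i}, σ h.1

/-- `ℓExpr(Γ) ⊆ Imp(wPol(Γ))`: every weighted polymorphism of `Γ` weight-improves every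
cost function in the local expressive power of `Γ`. -/
theorem lExpr_subset_imp_wPol (D : Type*) (Γ : Lang D) (r : ℕ)
    (ρ : CostFn D r) (hρ : LExpr Γ ρ) :
    Imp (wPol Γ) ρ := by
  rintro ⟨k, ω⟩ ⟨hw, himp⟩ x
  set C : ℝ := ∑ f ∈ ω.support, |ω f| with hC
  have hC0 : 0 ≤ C := Finset.sum_nonneg fun _ _ => abs_nonneg _
  have hsum0 : ∑ f ∈ ω.support, ω f = 0 := hw.1
  have key : ∀ ε : ℝ, 0 < ε →
      (ω.sum fun f w => w * ρ fun j => f fun i => x i j) ≤ ε * C := by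
    intro ε hε
    obtain ⟨lam, c, hlam, habs, hineq⟩ := hρ ε hε k x ω.support
    have step1 : (ω.sum fun f w => w * ρ fun j => f fun i => x i j)
        ≤ ∑ f ∈ ω.support, (ω f * (lamSum lam f + c) + |ω f| * ε) := by
      rw [Finsupp.sum]
      refine Finset.sum_le_sum fun f hf => ?_
      rcases le_or_gt 0 (ω f) with hw0 | hw0
      · have h1 := hineq f hf
        have h2 : ω f * ρ (fun j => f fun i => x i j) ≤ ω f * (lamSum lam f + c + ε) :=
          mul_le_mul_of_nonneg_left h1 hw0
        have h3 : ω f * ε ≤ |ω f| * ε := mul_le_mul_of_nonneg_right (le_abs_self _) hε.le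
        nlinarith [h2, h3]
      · obtain ⟨i, rfl⟩ : IsProj f := by
          by_contra h
          exact absurd (hw.2 f h) (not_le.mpr hw0)
        show (ω fun v => v i) * ρ (x i)
            ≤ (ω fun v => v i) * (lamSum lam (fun v => v i) + c) + |ω fun v => v i| * ε
        have h2 := abs_le.mp (habs i)
        have h3 : lamSum lam (fun v => v i) + c - ε ≤ ρ (x i) := by linarith [h2.1]
        have h4 : (ω fun v => v i) * ρ (x i)
            ≤ (ω fun v => v i) * (lamSum lam (fun v => v i) + c - ε) :=
          mul_le_mul_of_nonpos_left h3 hw0.le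
        have h5 : |(ω fun v => v i)| = -(ω fun v => v i) := abs_of_neg hw0
        rw [h5]
        nlinarith [h4]
    have step2 : ∑ f ∈ ω.support, ω f * lamSum lam f ≤ 0 := by
      simp only [lamSum, Finsupp.sum, Finset.mul_sum]
      rw [Finset.sum_comm]
      refine Finset.sum_nonpos fun p hp => ?_
      have himp' : ∑ f ∈ ω.support, ω f * p.1.1.2 (fun j => f (p.2 j)) ≤ 0 :=
        himp p.1.1 p.1.2 (fun i j => p.2 j i)
      have hrw : ∑ f ∈ ω.support, ω f * (lam p * p.1.1.2 fun j => f (p.2 j))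
          = lam p * ∑ f ∈ ω.support, ω f * p.1.1.2 (fun j => f (p.2 j)) := by
        rw [Finset.mul_sum]
        exact Finset.sum_congr rfl fun f _ => by ring
      rw [hrw]
      have := mul_le_mul_of_nonneg_left himp' (hlam p)
      simpa using this
    have expand : ∑ f ∈ ω.support, (ω f * (lamSum lam f + c) + |ω f| * ε)
        = (∑ f ∈ ω.support, ω f * lamSum lam f)
          + c * (∑ f ∈ ω.support, ω f) + ε * C := by
      rw [hC, Finset.mul_sum, Finset.mul_sum, ← Finset.sum_add_distrib,
        ← Finset.sum_add_distrib]
      exact Finset.sum_congr rfl fun f _ => by ring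
    rw [hsum0] at expand
    have : (∑ f ∈ ω.support, ω f * lamSum lam f) + c * 0 + ε * C ≤ ε * C := by
      linarith [step2]
    linarith [step1, expand, this]
  refine le_of_forall_pos_le_add fun δ hδ => ?_
  have h := key (δ / (C + 1)) (by positivity)
  have h2 : δ / (C + 1) * C ≤ δ := by
    rw [div_mul_eq_mul_div, div_le_iff₀ (by linarith)]
    nlinarith
  linarith
end

section
/- Let D be a set, Γ a set of real-valued cost functions over D, and ρ : D^r → ℝ. If ρ is weight-improved by every weighted polymorphism of Γ, then ρ belongs to the local expressive power of Γ; that is, Imp(wPol(Γ)) ⊆ ℓExpr(Γ). -/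
open Finsupp

lemma lamSum_zero {D : Type*} {Γ : Lang D} {k : ℕ} (f : Op D k) :
    lamSum (0 : MkIdx D Γ k →₀ ℝ) f = 0 := Finsupp.sum_zero_index

lemma lamSum_smul {D : Type*} {Γ : Lang D} {k : ℕ} (t : ℝ) (lam : MkIdx D Γ k →₀ ℝ)
    (f : Op D k) : lamSum (t • lam) f = t * lamSum lam f := by
  unfold lamSum
  have hzero : ∀ p : MkIdx D Γ k, (0 : ℝ) * (p.1.1.2 fun j => f (p.2 j)) = 0 :=
    fun p => zero_mul _
  rw [Finsupp.sum_smul_index hzero, Finsupp.mul_sum]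
  exact Finsupp.sum_congr fun p _ => by ring

lemma lamSum_add {D : Type*} {Γ : Lang D} {k : ℕ} (l₁ l₂ : MkIdx D Γ k →₀ ℝ)
    (f : Op D k) : lamSum (l₁ + l₂) f = lamSum l₁ f + lamSum l₂ f :=
  Finsupp.sum_add_index' (fun p => zero_mul _) (fun p b₁ b₂ => add_mul _ _ _)

lemma lamSum_single {D : Type*} {Γ : Lang D} {k : ℕ} (p : MkIdx D Γ k) (w : ℝ)
    (f : Op D k) : lamSum (Finsupp.single p w) f = w * p.1.1.2 fun j => f (p.2 j) :=
  Finsupp.sum_single_index (zero_mul _)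

/-- `Imp(wPol(Γ)) ⊆ ℓExpr(Γ)`: if `ρ` is weight-improved by every weighted polymorphism
of `Γ`, then `ρ` belongs to the local expressive power of `Γ`. -/
theorem imp_wPol_subset_lExpr (D : Type*) (Γ : Lang D) (r : ℕ)
    (ρ : CostFn D r) (hρ : Imp (wPol Γ) ρ) :
    LExpr Γ ρ := by
  classical
  intro ε hε k x F
  -- enlarge F with all projections
  set F' : Finset (Op D k) :=
    F ∪ (Finset.univ.image fun i : Fin k => (fun v => v i : Op D k)) with hF'
  set ι := {f : Op D k // f ∈ F'} with hι
  -- the Euclidean space indexed by F'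
  -- the target vector
  set u : ι → ℝ := fun f => ρ fun j => f.1 fun i => x i j with hu
  -- the convex cone of achievable vectors
  set C : Set (ι → ℝ) := {z | ∃ (lam : MkIdx D Γ k →₀ ℝ) (c : ℝ),
      (∀ p, 0 ≤ lam p) ∧ (∀ f : ι, z f ≤ lamSum lam f.1 + c) ∧
      (∀ f : ι, IsProj f.1 → z f = lamSum lam f.1 + c)} with hC
  -- main claim: u is in the closure of C
  have hmain : u ∈ closure C := by
    by_contra hu'
    -- C is convex
    have hconv : Convex ℝ C := by
      rintro z₁ ⟨l₁, c₁, hl₁, hle₁, heq₁⟩ z₂ ⟨l₂, c₂, hl₂, hle₂, heq₂⟩ a b ha hb hab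
      refine ⟨a • l₁ + b • l₂, a * c₁ + b * c₂, ?_, ?_, ?_⟩
      · intro p
        simp only [Finsupp.add_apply, Finsupp.smul_apply, smul_eq_mul]
        exact add_nonneg (mul_nonneg ha (hl₁ p)) (mul_nonneg hb (hl₂ p))
      · intro f
        have h₁ := mul_le_mul_of_nonneg_left (hle₁ f) ha
        have h₂ := mul_le_mul_of_nonneg_left (hle₂ f) hb
        rw [mul_add] at h₁ h₂
        have hz : (a • z₁ + b • z₂) f = a * z₁ f + b * z₂ f := rfl
        rw [hz, lamSum_add, lamSum_smul, lamSum_smul]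
        linarith
      · intro f hfp
        have hz : (a • z₁ + b • z₂) f = a * z₁ f + b * z₂ f := rfl
        rw [hz, heq₁ f hfp, heq₂ f hfp, lamSum_add, lamSum_smul, lamSum_smul]
        ring
    have hclos : IsClosed (closure C) := isClosed_closure
    obtain ⟨φ, s, hsep, hsu⟩ :=
      geometric_hahn_banach_closed_point (hconv.closure) hclos hu'
    -- 0 ∈ C
    have h0C : (0 : ι → ℝ) ∈ C := by
      refine ⟨0, 0, fun p => le_rfl, fun f => by simp [lamSum_zero], fun f _ => by
        simp [lamSum_zero]⟩
    have hs0 : (0 : ℝ) < s := by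
      have := hsep 0 (subset_closure h0C)
      simpa using this
    -- φ is ≤ 0 on C
    have hφC : ∀ z ∈ C, φ z ≤ 0 := by
      intro z hz
      by_contra hpos
      push_neg at hpos
      set t : ℝ := (s + 1) / φ z with ht
      have htpos : 0 < t := div_pos (by linarith) hpos
      have htz : t • z ∈ C := by
        obtain ⟨lam, c, hl, hle, heq⟩ := hz
        refine ⟨t • lam, t * c, ?_, ?_, ?_⟩
        · intro p
          simp only [Finsupp.smul_apply, smul_eq_mul]
          exact mul_nonneg htpos.le (hl p)
        · intro f
          have h₁ := mul_le_mul_of_nonneg_left (hle f) htpos.le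
          rw [mul_add] at h₁
          have hz : (t • z) f = t * z f := rfl
          rw [hz, lamSum_smul]
          linarith
        · intro f hfp
          have hz : (t • z) f = t * z f := rfl
          rw [hz, heq f hfp, lamSum_smul]
          ring
      have := hsep _ (subset_closure htz)
      rw [map_smul] at this
      have : t * φ z < s := this
      rw [ht, div_mul_cancel₀ _ (ne_of_gt hpos)] at this
      linarith
    -- define the weighting ω from φ
    set y : Op D k →₀ ℝ := Finsupp.onFinset F'
        (fun g => if hg : g ∈ F' then φ (Pi.single (⟨g, hg⟩ : ι) 1) else 0)
        (fun g hg => by by_contra h; simp [h] at hg) with hy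
    have hyval : ∀ (g : Op D k) (hg : g ∈ F'), y g = φ (Pi.single (⟨g, hg⟩ : ι) 1) := by
      intro g hg
      simp [hy, Finsupp.onFinset_apply, dif_pos hg]
    have hyval0 : ∀ g : Op D k, g ∉ F' → y g = 0 := by
      intro g hg
      simp [hy, Finsupp.onFinset_apply, dif_neg hg]
    -- representation of φ on vectors
    have hrep : ∀ a : ι → ℝ, a = ∑ f : ι, a f • (Pi.single f 1 : ι → ℝ) := by
      intro a
      funext g
      rw [Finset.sum_apply]
      simp [Pi.single_apply]
      exact (Fintype.sum_ite_eq g a).symm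
    have hφsum : ∀ V : Op D k → ℝ,
        (y.sum fun f w => w * V f) = φ (fun f : ι => V f.1) := by
      intro V
      rw [Finsupp.sum_of_support_subset y Finsupp.support_onFinset_subset
        (fun f w => w * V f) (fun i _ => zero_mul _)]
      rw [← Finset.sum_attach F' (fun g => y g * V g)]
      have : ∀ f : ι, y f.1 * V f.1 = V f.1 * φ (Pi.single f 1) := by
        intro f
        rw [hyval f.1 f.2, mul_comm]
      rw [Finset.sum_congr rfl (fun f _ => this f)]
      conv_rhs => rw [hrep (fun f : ι => V f.1)]
      rw [map_sum]
      exact Finset.sum_congr rfl fun f _ => by rw [map_smul, smul_eq_mul]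
    -- constants are in C
    have hconst : ∀ c : ℝ, (fun _ : ι => c) ∈ C := by
      intro c
      exact ⟨0, c, fun p => le_rfl, fun f => by simp [lamSum_zero], fun f _ => by
        simp [lamSum_zero]⟩
    have hφ1 : φ (fun _ : ι => (1 : ℝ)) = 0 := by
      have h1 := hφC _ (hconst 1)
      have h2 := hφC _ (hconst (-1))
      have : (fun _ : ι => (-1 : ℝ)) = -(fun _ : ι => (1 : ℝ)) := by funext f; simp
      rw [this, map_neg] at h2
      linarith
    -- y is a weighting
    have hysum : (y.sum fun _ w => w) = 0 := by
      have h := hφsum fun _ => (1 : ℝ)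
      simp only [mul_one] at h
      rw [h, hφ1]
    have hynonneg : ∀ f : Op D k, ¬ IsProj f → 0 ≤ y f := by
      intro f hf
      by_cases hfF : f ∈ F'
      · rw [hyval f hfF]
        set e : ι → ℝ := Pi.single (⟨f, hfF⟩ : ι) 1 with he
        have hmem : -e ∈ C := by
          refine ⟨0, 0, fun p => le_rfl, ?_, ?_⟩
          · intro g
            have h1 : (0 : ℝ) ≤ e g := by
              rw [he, Pi.single_apply]; split <;> norm_num
            have h2 : (-e) g = -(e g) := rfl
            rw [h2, lamSum_zero]
            linarith
          · intro g hgp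
            have hne : g ≠ (⟨f, hfF⟩ : ι) := by
              intro h
              rw [h] at hgp
              exact hf hgp
            have h2 : (-e) g = -(e g) := rfl
            rw [h2, lamSum_zero, he, Pi.single_apply, if_neg hne]
            norm_num
        have := hφC _ hmem
        rw [map_neg] at this
        linarith
      · rw [hyval0 f hfF]
    -- y improves every γ ∈ Γ
    have himp : ∀ γ ∈ Γ, Improves y γ.2 := by
      rintro γ hγ x'
      set p : MkIdx D Γ k := ⟨⟨γ, hγ⟩, fun j i => x' i j⟩ with hp
      have hmem : (fun f : ι => γ.2 fun j => f.1 fun i => x' i j) ∈ C := by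
        refine ⟨Finsupp.single p 1, 0, ?_, ?_, ?_⟩
        · intro q
          rw [Finsupp.single_apply]
          split <;> norm_num
        · intro f
          rw [lamSum_single]
          simp [hp]
          exact le_rfl
        · intro f _
          rw [lamSum_single]
          simp [hp]
          rfl
      have := hφC _ hmem
      rw [← hφsum (fun f => γ.2 fun j => f fun i => x' i j)] at this
      exact this
    -- contradiction with hρ
    have hwpol : (⟨k, y⟩ : Σ k : ℕ, Op D k →₀ ℝ) ∈ wPol Γ := ⟨⟨hysum, hynonneg⟩, himp⟩
    have himpρ := hρ _ hwpol x
    rw [hφsum (fun f => ρ fun j => f fun i => x i j)] at himpρ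
    have : φ u ≤ 0 := himpρ
    linarith
  -- extract the approximation
  rw [Metric.mem_closure_iff] at hmain
  obtain ⟨z, hzC, hdist⟩ := hmain ε hε
  obtain ⟨lam, c, hl, hle, heq⟩ := hzC
  refine ⟨lam, c, hl, ?_, ?_⟩
  · intro i
    have hproj : (fun v => v i : Op D k) ∈ F' := by
      rw [hF']
      exact Finset.mem_union_right _ (Finset.mem_image.2 ⟨i, Finset.mem_univ i, rfl⟩)
    set f : ι := ⟨fun v => v i, hproj⟩ with hf
    have h1 : z f = lamSum lam (fun v => v i) + c := heq f ⟨i, rfl⟩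
    have h2 : dist (u f) (z f) ≤ dist u z := dist_le_pi_dist u z f
    have h3 : u f = ρ (x i) := rfl
    rw [h3, h1] at h2
    rw [Real.dist_eq] at h2
    linarith [le_of_lt hdist, h2]
  · intro g hg
    have hgF : g ∈ F' := by rw [hF']; exact Finset.mem_union_left _ hg
    set f : ι := ⟨g, hgF⟩ with hf
    have h1 : z f ≤ lamSum lam g + c := hle f
    have h2 : dist (u f) (z f) ≤ dist u z := dist_le_pi_dist u z f
    have h3 : u f = ρ fun j => g fun i => x i j := rfl
    rw [h3, Real.dist_eq] at h2
    have : |ρ (fun j => g fun i => x i j) - z f| ≤ ε := le_trans h2 (le_of_lt hdist)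
    have := abs_le.1 this
    linarith [this.2]
end

section
/- Let D be any set and Γ any set of real-valued cost functions over D. Then Imp(wPol(Γ)) = ℓExpr(Γ): the set of cost functions weight-improved by all weighted polymorphisms of Γ equals the local expressive power of Γ. -/
open Finsupp

/-- Evaluating a `Finsupp.sum` of a finite sum of singles. -/
lemma sum_single_mul_eval {α ι : Type*} (s : Finset ι) (g : ι → α) (a : ι → ℝ)
    (h : α → ℝ) :
    ((∑ i ∈ s, Finsupp.single (g i) (a i)).sum fun f w => w * h f) = ∑ i ∈ s, a i * h (g i) := by
  classical
  induction s using Finset.induction_on with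
  | empty => simp
  | insert _ _ hx ih =>
      rw [Finset.sum_insert hx, Finsupp.sum_add_index' (by simp) (by intros; ring),
        Finsupp.sum_single_index (by simp), Finset.sum_insert hx, ih]

lemma lexpr_imp {D : Type*} (Γ : Lang D) (r : ℕ) (ρ : CostFn D r)
    (hexp : LExpr Γ ρ) : Imp (wPol Γ) ρ := by
  classical
  rintro ⟨k, ω⟩ ⟨⟨hsum, hnn⟩, himpΓ⟩ xx
  refine le_of_forall_pos_le_add fun δ hδ => ?_
  set B : ℝ := ∑ f ∈ ω.support, |ω f| with hB
  have hB0 : 0 ≤ B := Finset.sum_nonneg fun _ _ => abs_nonneg _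
  set ε : ℝ := δ / (B + 1) with hε
  have hε0 : 0 < ε := div_pos hδ (by linarith)
  obtain ⟨lam, c, h0, h1, h2⟩ := hexp ε hε0 k xx ω.support
  have key : ∀ f ∈ ω.support,
      ω f * ρ (fun j => f fun i => xx i j) ≤ ω f * (lamSum lam f + c) + |ω f| * ε := by
    intro f hf
    by_cases hp : IsProj f
    · obtain ⟨i, rfl⟩ := hp
      have habs : |ρ (xx i) - (lamSum lam (fun v => v i) + c)| ≤ ε := h1 i
      have hmul : ω (fun z => z i) * (ρ (xx i) - (lamSum lam (fun v => v i) + c))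
          ≤ |ω (fun z => z i)| * ε := by
        calc ω (fun z => z i) * (ρ (xx i) - (lamSum lam (fun v => v i) + c))
            ≤ |ω (fun z => z i) * (ρ (xx i) - (lamSum lam (fun v => v i) + c))| :=
              le_abs_self _
          _ = |ω (fun z => z i)| * |ρ (xx i) - (lamSum lam (fun v => v i) + c)| := abs_mul _ _
          _ ≤ |ω (fun z => z i)| * ε := by
              exact mul_le_mul_of_nonneg_left habs (abs_nonneg _)
      have heq : ρ (fun j => (fun z => z i) fun i' => xx i' j) = ρ (xx i) := rfl
      rw [heq]
      nlinarith [hmul]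
    · have hw : 0 ≤ ω f := hnn f hp
      have hle := h2 f hf
      have h1' : ω f * ρ (fun j => f fun i => xx i j) ≤ ω f * (lamSum lam f + c + ε) :=
        mul_le_mul_of_nonneg_left hle hw
      have h2' : ω f * ε ≤ |ω f| * ε :=
        mul_le_mul_of_nonneg_right (le_abs_self _) (le_of_lt hε0)
      nlinarith
  have hS : (ω.sum fun f w => w * ρ fun j => f fun i => xx i j)
      = ∑ f ∈ ω.support, ω f * ρ (fun j => f fun i => xx i j) := rfl
  have hT : ∑ f ∈ ω.support, ω f * lamSum lam f ≤ 0 := by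
    have hswap : ∑ f ∈ ω.support, ω f * lamSum lam f
        = ∑ p ∈ lam.support, lam p *
            ∑ f ∈ ω.support, ω f * p.1.1.2 (fun j => f (p.2 j)) := by
      unfold lamSum Finsupp.sum
      calc ∑ f ∈ ω.support, ω f * ∑ p ∈ lam.support, lam p * p.1.1.2 (fun j => f (p.2 j))
          = ∑ f ∈ ω.support, ∑ p ∈ lam.support,
              lam p * (ω f * p.1.1.2 (fun j => f (p.2 j))) := by
            refine Finset.sum_congr rfl fun f _ => ?_
            rw [Finset.mul_sum]
            exact Finset.sum_congr rfl fun p _ => by ring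
        _ = ∑ p ∈ lam.support, ∑ f ∈ ω.support,
              lam p * (ω f * p.1.1.2 (fun j => f (p.2 j))) := Finset.sum_comm
        _ = ∑ p ∈ lam.support, lam p *
              ∑ f ∈ ω.support, ω f * p.1.1.2 (fun j => f (p.2 j)) := by
            exact Finset.sum_congr rfl fun p _ => (Finset.mul_sum _ _ _).symm
    rw [hswap]
    refine Finset.sum_nonpos fun p _ => mul_nonpos_of_nonneg_of_nonpos (h0 p) ?_
    have := himpΓ p.1.1 p.1.2 (fun i j => p.2 j i)
    exact this
  have hsum0 : ∑ f ∈ ω.support, ω f = 0 := hsum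
  calc (ω.sum fun f w => w * ρ fun j => f fun i => xx i j)
      ≤ ∑ f ∈ ω.support, (ω f * (lamSum lam f + c) + |ω f| * ε) := by
        rw [hS]; exact Finset.sum_le_sum key
    _ = (∑ f ∈ ω.support, ω f * lamSum lam f) + (∑ f ∈ ω.support, ω f) * c + B * ε := by
        rw [Finset.sum_add_distrib, hB, Finset.sum_mul, Finset.sum_mul]
        congr 1
        · rw [← Finset.sum_add_distrib]
          exact Finset.sum_congr rfl fun f _ => by ring
    _ ≤ 0 + 0 * c + B * ε := by
        rw [hsum0]
        linarith [hT]
    _ ≤ 0 + δ := by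
        have h1 : B * ε ≤ δ := by
          rw [hε]
          rw [div_eq_mul_inv, ← mul_assoc]
          have hpos : (0:ℝ) < B + 1 := by linarith
          rw [mul_comm B δ, mul_assoc]
          have : B * (B + 1)⁻¹ ≤ 1 := by
            rw [← div_eq_mul_inv, div_le_one hpos]; linarith
          nlinarith
        linarith

lemma sum_add_eval {α : Type*} (l₁ l₂ : α →₀ ℝ) (h : α → ℝ) :
    ((l₁ + l₂).sum fun p w => w * h p)
      = (l₁.sum fun p w => w * h p) + l₂.sum fun p w => w * h p :=
  Finsupp.sum_add_index' (by simp) (by intros; ring)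

lemma sum_smul_eval {α : Type*} (l : α →₀ ℝ) (h : α → ℝ) (t : ℝ) :
    ((t • l).sum fun p w => w * h p) = t * l.sum fun p w => w * h p := by
  rw [Finsupp.sum_smul_index (fun p => by rw [zero_mul]), Finsupp.mul_sum]
  exact Finsupp.sum_congr fun p _ => by ring

set_option maxHeartbeats 2000000 in
lemma imp_lexpr {D : Type*} (Γ : Lang D) (r : ℕ) (ρ : CostFn D r)
    (himp : Imp (wPol Γ) ρ) : LExpr Γ ρ := by
  classical
  intro ε hε k x F
  set v : MkIdx D Γ k → EuclideanSpace ℝ (Fin k ⊕ {f : Op D k // f ∈ F}) := fun p =>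
    WithLp.toLp 2 (Sum.elim (fun i => p.1.1.2 fun j => p.2 j i)
      (fun (f : {f : Op D k // f ∈ F}) => p.1.1.2 fun j => f.1 (p.2 j)))
    with hv
  set y : EuclideanSpace ℝ (Fin k ⊕ {f : Op D k // f ∈ F}) :=
    WithLp.toLp 2 (Sum.elim (fun i => ρ (x i))
      (fun (f : {f : Op D k // f ∈ F}) => ρ fun j => f.1 fun i => x i j)) with hy
  set K : ConvexCone ℝ (EuclideanSpace ℝ (Fin k ⊕ {f : Op D k // f ∈ F})) :=
    { carrier := { z | ∃ (lam : MkIdx D Γ k →₀ ℝ) (c : ℝ) (s : {f : Op D k // f ∈ F} → ℝ),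
        (∀ p, 0 ≤ lam p) ∧ (∀ f, 0 ≤ s f) ∧
        ∀ i, z i = (lam.sum fun p w => w * v p i) + c - Sum.elim (fun _ => (0:ℝ)) s i }
      smul_mem' := by
        rintro t ht z ⟨lam, c, s, hlam, hs, hz⟩
        refine ⟨t • lam, t * c, t • s, fun p => ?_, fun f => mul_nonneg ht.le (hs f),
          fun i => ?_⟩
        · have : (t • lam) p = t * lam p := rfl
          rw [this]; exact mul_nonneg ht.le (hlam p)
        · have hzi : (t • z) i = t * z i := rfl
          rw [hzi, hz i, sum_smul_eval]
          have hts : (t • s : {f : Op D k // f ∈ F} → ℝ) = fun f => t * s f := rfl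
          cases i with
          | inl i => simp only [Sum.elim_inl]; ring
          | inr f => simp only [Sum.elim_inr, hts]; ring
      add_mem' := by
        rintro z₁ ⟨l₁, c₁, s₁, h₁, hs₁, hz₁⟩ z₂ ⟨l₂, c₂, s₂, h₂, hs₂, hz₂⟩
        refine ⟨l₁ + l₂, c₁ + c₂, s₁ + s₂, fun p => ?_, fun f => add_nonneg (hs₁ f) (hs₂ f),
          fun i => ?_⟩
        · have : (l₁ + l₂) p = l₁ p + l₂ p := rfl
          rw [this]; exact add_nonneg (h₁ p) (h₂ p)
        · have hzi : (z₁ + z₂) i = z₁ i + z₂ i := rfl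
          rw [hzi, hz₁ i, hz₂ i, sum_add_eval]
          cases i with
          | inl i => simp only [Sum.elim_inl]; ring
          | inr f =>
              have : (s₁ + s₂) f = s₁ f + s₂ f := rfl
              simp only [Sum.elim_inr, this]; ring } with hK
  have inner_eq : ∀ z w : EuclideanSpace ℝ (Fin k ⊕ {f : Op D k // f ∈ F}), (inner ℝ z w : ℝ) = ∑ i, z i * w i := by
    intro z w
    simp [PiLp.inner_apply, RCLike.inner_apply, conj_trivial, mul_comm]
  have h0K : (0 : EuclideanSpace ℝ (Fin k ⊕ {f : Op D k // f ∈ F})) ∈ K := by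
    refine ⟨0, 0, 0, fun p => le_refl _, fun f => le_refl _, fun i => ?_⟩
    have : (0 : EuclideanSpace ℝ (Fin k ⊕ {f : Op D k // f ∈ F})) i = 0 := rfl
    rw [this, Finsupp.sum_zero_index]
    cases i <;> simp
  -- the crucial claim : `y` lies in the closure of the cone `K`
  have hclosure : y ∈ closure (K : Set (EuclideanSpace ℝ (Fin k ⊕ {f : Op D k // f ∈ F}))) := by
    by_contra hyc
    have hK' : y ∉ K.closure := fun h => hyc ((ConvexCone.mem_closure).1 h)
    let P : ProperCone ℝ (EuclideanSpace ℝ (Fin k ⊕ {f : Op D k // f ∈ F})) :=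
      { carrier := closure (K : Set (EuclideanSpace ℝ (Fin k ⊕ {f : Op D k // f ∈ F})))
        zero_mem' := subset_closure h0K
        smul_mem' := fun c _ h₁ => map_mem_closure (continuous_const_smul (c : ℝ)) h₁
          fun _ h₂ => by
            rcases (c.2).eq_or_lt with h | h
            · rw [show c = 0 from Subtype.ext h.symm, zero_smul]; exact h0K
            · exact K.smul_mem h h₂
        add_mem' := fun h₁ h₂ => map_mem_closure₂ continuous_add h₁ h₂
          (fun _ ha _ hb => K.add_mem ha hb)
        isClosed' := isClosed_closure }
    obtain ⟨u, hu, huy⟩ := P.hyperplane_separation' (x₀ := y) (fun h => hyc h)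
    have huK : ∀ z ∈ K, 0 ≤ (inner ℝ z u : ℝ) := fun z hz =>
      hu z (subset_closure hz)
    -- total weight is zero
    have h_one : (WithLp.toLp 2 (fun _ => (1:ℝ)) : EuclideanSpace ℝ (Fin k ⊕ {f : Op D k // f ∈ F})) ∈ K := by
      refine ⟨0, 1, 0, fun p => le_refl _, fun f => le_refl _, fun i => ?_⟩
      rw [Finsupp.sum_zero_index]; cases i <;> simp
    have h_negone : (WithLp.toLp 2 (fun _ => (-1:ℝ)) : EuclideanSpace ℝ (Fin k ⊕ {f : Op D k // f ∈ F})) ∈ K := by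
      refine ⟨0, -1, 0, fun p => le_refl _, fun f => le_refl _, fun i => ?_⟩
      rw [Finsupp.sum_zero_index]; cases i <;> simp
    have hsum0 : ∑ i, u i = 0 := by
      have a := huK _ h_one
      have b := huK _ h_negone
      rw [inner_eq] at a b
      simp only [one_mul, neg_mul, neg_one_mul, Finset.sum_neg_distrib] at a b
      linarith
    -- the inner-coordinates of `u` are nonpositive
    have hfneg : ∀ f : {f : Op D k // f ∈ F}, u (Sum.inr f) ≤ 0 := by
      intro f
      have hmem : (WithLp.toLp 2 (fun i => -(Sum.elim (fun _ => (0:ℝ))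
          (fun f' => if f' = f then (1:ℝ) else 0) i)) : EuclideanSpace ℝ (Fin k ⊕ {f : Op D k // f ∈ F})) ∈ K := by
        refine ⟨0, 0, fun f' => if f' = f then (1:ℝ) else 0,
          fun p => le_refl _, fun f' => by positivity, fun i => ?_⟩
        rw [Finsupp.sum_zero_index]; cases i <;> simp
      have h := huK _ hmem
      rw [inner_eq, Fintype.sum_sum_type] at h
      simp only [Sum.elim_inl, Sum.elim_inr, neg_zero, zero_mul,
        Finset.sum_const_zero, zero_add, neg_mul, ite_mul, one_mul] at h
      rw [Finset.sum_neg_distrib,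
        Finset.sum_ite_eq' Finset.univ f (fun f' => u (Sum.inr f'))] at h
      simp at h
      linarith
    -- the vectors `v p` have nonnegative inner product with `u`
    have hvp : ∀ p : MkIdx D Γ k, 0 ≤ ∑ i, v p i * u i := by
      intro p
      have hmem : v p ∈ K := by
        refine ⟨Finsupp.single p 1, 0, 0, fun q => ?_, fun f => le_refl _, fun i => ?_⟩
        · rw [Finsupp.single_apply]; split <;> norm_num
        · rw [Finsupp.sum_single_index (by rw [zero_mul])]
          cases i <;> simp
      have h := huK _ hmem
      rw [inner_eq] at h
      exact h
    -- assemble the weighting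
    set gg : (Fin k ⊕ {f : Op D k // f ∈ F}) → Op D k := Sum.elim (fun i => fun z => z i) (fun f => f.1) with hgg
    set ω : Op D k →₀ ℝ := ∑ i : (Fin k ⊕ {f : Op D k // f ∈ F}), Finsupp.single (gg i) (-(u i)) with hω
    have heval : ∀ h : Op D k → ℝ,
        (ω.sum fun f w => w * h f) = ∑ i, (-(u i)) * h (gg i) := fun h =>
      sum_single_mul_eval Finset.univ gg (fun i => -(u i)) h
    have hwsum : (ω.sum fun _ w => w) = 0 := by
      have h1 : (ω.sum fun _ w => w) = ω.sum fun f w => w * (1:ℝ) := by simp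
      rw [h1, heval]
      simp [Finset.sum_neg_distrib, hsum0]
    have hwnn : ∀ f : Op D k, ¬ IsProj f → 0 ≤ ω f := by
      intro f hf
      rw [hω, Finsupp.finset_sum_apply]
      refine Finset.sum_nonneg fun i _ => ?_
      rw [Finsupp.single_apply]
      split
      next h =>
        cases i with
        | inl i => exact absurd ⟨i, h.symm⟩ hf
        | inr f' => simpa using hfneg f'
      next => exact le_refl _
    have hwimp : ∀ γ ∈ Γ, Improves ω γ.2 := by
      intro γ hγ x'
      set p : MkIdx D Γ k := ⟨⟨γ, hγ⟩, fun j i => x' i j⟩ with hp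
      have h := hvp p
      calc (ω.sum fun f w => w * γ.2 fun j => f fun i => x' i j)
          = ∑ i, (-(u i)) * ((fun f => γ.2 fun j => f fun i' => x' i' j) (gg i)) := heval _
        _ = ∑ i, -(v p i * u i) := by
            refine Finset.sum_congr rfl fun i _ => ?_
            cases i with
            | inl i => show -(u _) * _ = _; ring_nf; rfl
            | inr f => show -(u _) * _ = _; ring_nf; rfl
        _ = -∑ i, v p i * u i := by rw [Finset.sum_neg_distrib]
        _ ≤ 0 := neg_nonpos.2 h
    have hmem : (⟨k, ω⟩ : Σ k : ℕ, Op D k →₀ ℝ) ∈ wPol Γ := ⟨⟨hwsum, hwnn⟩, hwimp⟩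
    have hfin := himp ⟨k, ω⟩ hmem x
    rw [show (ω.sum fun f w => w * ρ fun j => f fun i => x i j)
        = ∑ i, (-(u i)) * ((fun f => ρ fun j => f fun i' => x i' j) (gg i)) from heval _] at hfin
    have hyi : ∀ i, ((fun f => ρ fun j => f fun i' => x i' j) (gg i)) = y i := by
      intro i; cases i <;> rfl
    rw [Finset.sum_congr rfl (fun i _ => by rw [hyi i])] at hfin
    rw [inner_eq] at huy
    have : ∑ i, (-(u i)) * y i = -∑ i, u i * y i := by
      rw [← Finset.sum_neg_distrib]
      exact Finset.sum_congr rfl fun i _ => by ring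
    rw [this] at hfin
    linarith [Finset.sum_congr rfl (fun i (_ : i ∈ Finset.univ) => mul_comm (y i) (u i))]
  -- extract an `ε`-close element of the cone
  obtain ⟨z, hzK, hdist⟩ := Metric.mem_closure_iff.1 hclosure ε hε
  obtain ⟨lam, c, s, hlam, hs, hz⟩ := hzK
  have hcd : ∀ i, |y i - z i| ≤ ε := by
    intro i
    have h2 : dist y z = Real.sqrt (∑ j, dist (y j) (z j) ^ 2) := EuclideanSpace.dist_eq y z
    have h3 : dist (y i) (z i) ^ 2 ≤ ∑ j, dist (y j) (z j) ^ 2 :=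
      Finset.single_le_sum (f := fun j => dist (y j) (z j) ^ 2)
        (fun j _ => sq_nonneg _) (Finset.mem_univ i)
    have h4 := Real.sqrt_le_sqrt h3
    rw [Real.sqrt_sq dist_nonneg, Real.dist_eq] at h4
    rw [h2] at hdist
    linarith
  refine ⟨lam, c, hlam, fun i => ?_, fun f hf => ?_⟩
  · have h := hcd (Sum.inl i)
    have hz' := hz (Sum.inl i)
    have hzi : z (Sum.inl i) = lamSum lam (fun v => v i) + c := by
      rw [hz']
      show _ - (0:ℝ) = _
      rw [sub_zero]
      rfl
    have hyi : y (Sum.inl i) = ρ (x i) := rfl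
    rw [← hyi, ← hzi]
    exact h
  · have h := hcd (Sum.inr ⟨f, hf⟩)
    have h1 : y (Sum.inr ⟨f, hf⟩) - z (Sum.inr ⟨f, hf⟩) ≤ ε := (abs_le.1 h).2
    have hz' := hz (Sum.inr ⟨f, hf⟩)
    have hls : (lam.sum fun p w => w * v p (Sum.inr ⟨f, hf⟩)) = lamSum lam f := rfl
    have hse : Sum.elim (fun _ : Fin k => (0:ℝ)) s
        (Sum.inr (⟨f, hf⟩ : {f : Op D k // f ∈ F})) = s ⟨f, hf⟩ := rfl
    rw [hz', hse, hls] at h1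
    have hyj : y (Sum.inr ⟨f, hf⟩) = ρ fun j => f fun i => x i j := rfl
    rw [hyj] at h1
    linarith [hs ⟨f, hf⟩]

/-- Main theorem: for any set `D` and any set `Γ` of cost functions over `D`,
`Imp(wPol(Γ)) = ℓExpr(Γ)`. -/
theorem imp_wPol_eq_lExpr (D : Type*) (Γ : Lang D) (r : ℕ) (ρ : CostFn D r) :
    Imp (wPol Γ) ρ ↔ LExpr Γ ρ := by
  constructor
  · exact imp_lexpr Γ r ρ
  · exact lexpr_imp Γ r ρ
end
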